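/- Let Ω ⊆ ℂ × ℂ be open and let y : Ω → ℂ be holomorphic in both variables (z, t) and nowhere zero. Define u := −(∂²y/∂z²)/y on Ω, and assume that y satisfies the evolution equation ∂y/∂t = (∂u/∂z)·y − 2·u·(∂y/∂z) on Ω. Then u satisfies the KdV equation ∂u/∂t = −∂³u/∂z³ − 6·u·(∂u/∂z) on Ω. -/

import Mathlib

open Complex

/-- Partial derivative in the first (space, `z`) variable of a function on `ℂ × ℂ`. -/
noncomputable def dz (f : ℂ × ℂ → ℂ) (p : ℂ × ℂ) : ℂ := fderiv ℂ f p (1, 0)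

/-- Partial derivative in the second (time, `t`) variable of a function on `ℂ × ℂ`. -/
noncomputable def dt (f : ℂ × ℂ → ℂ) (p : ℂ × ℂ) : ℂ := fderiv ℂ f p (0, 1)

/-- The Schrödinger potential `u = −(∂²y/∂z²)/y` of a nowhere-zero function `y(z,t)`. -/
noncomputable def schrodingerPotential (y : ℂ × ℂ → ℂ) : ℂ × ℂ → ℂ := fun p =>
  -(dz (dz y) p) / y p

section Helpers

private lemma adv {f : ℂ × ℂ → ℂ} {Ω : Set (ℂ × ℂ)} (hf : AnalyticOnNhd ℂ f Ω) (v : ℂ × ℂ) :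
    AnalyticOnNhd ℂ (fun p => fderiv ℂ f p v) Ω :=
  (ContinuousLinearMap.apply ℂ ℂ v).comp_analyticOnNhd hf.fderiv

private lemma dv_mul {f g : ℂ × ℂ → ℂ} {p v : ℂ × ℂ} (hf : DifferentiableAt ℂ f p)
    (hg : DifferentiableAt ℂ g p) :
    fderiv ℂ (fun q => f q * g q) p v = fderiv ℂ f p v * g p + f p * fderiv ℂ g p v := by
  rw [fderiv_fun_mul hf hg]
  simp [smul_eq_mul]
  ring

private lemma dv_neg {f : ℂ × ℂ → ℂ} {p v : ℂ × ℂ} :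
    fderiv ℂ (fun q => -f q) p v = -(fderiv ℂ f p v) := by
  rw [fderiv_fun_neg]; simp

private lemma dv_sub {f g : ℂ × ℂ → ℂ} {p v : ℂ × ℂ} (hf : DifferentiableAt ℂ f p)
    (hg : DifferentiableAt ℂ g p) :
    fderiv ℂ (fun q => f q - g q) p v = fderiv ℂ f p v - fderiv ℂ g p v := by
  rw [fderiv_fun_sub hf hg]; simp

private lemma dv_add {f g : ℂ × ℂ → ℂ} {p v : ℂ × ℂ} (hf : DifferentiableAt ℂ f p)
    (hg : DifferentiableAt ℂ g p) :
    fderiv ℂ (fun q => f q + g q) p v = fderiv ℂ f p v + fderiv ℂ g p v := by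
  rw [fderiv_fun_add hf hg]; simp

private lemma dv_const_mul {f : ℂ × ℂ → ℂ} {p v : ℂ × ℂ} (hf : DifferentiableAt ℂ f p) (c : ℂ) :
    fderiv ℂ (fun q => c * f q) p v = c * fderiv ℂ f p v := by
  rw [fderiv_const_mul hf c]; simp

private lemma clairaut {f : ℂ × ℂ → ℂ} {p : ℂ × ℂ} (hf : AnalyticAt ℂ f p) (v w : ℂ × ℂ) :
    fderiv ℂ (fun q => fderiv ℂ f q v) p w = fderiv ℂ (fun q => fderiv ℂ f q w) p v := by
  have hfd : DifferentiableAt ℂ (fderiv ℂ f) p := hf.fderiv.differentiableAt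
  have h1 : ∀ u : ℂ × ℂ, fderiv ℂ (fun q => fderiv ℂ f q u) p
      = (fderiv ℂ (fderiv ℂ f) p).flip u := by
    intro u
    have h := fderiv_clm_apply (c := fderiv ℂ f) (u := fun _ => u) hfd (differentiableAt_const u)
    simpa using h
  have hsymm : IsSymmSndFDerivAt ℂ f p :=
    (hf.contDiffAt (n := ⊤)).isSymmSndFDerivAt le_top
  rw [h1 v, h1 w]
  simp only [ContinuousLinearMap.flip_apply]
  exact hsymm w v

end Helpers

/-- If a nowhere-zero holomorphic `y(z,t)` satisfies the evolution equation
`∂y/∂t = u' y − 2 u y'` where `u = −y''/y` (so `y'' + u y = 0`), then `u` satisfies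
the KdV equation `∂u/∂t = −u''' − 6 u u'`. -/
theorem kdv_from_schrodinger_evolution
    (Ω : Set (ℂ × ℂ)) (hΩ : IsOpen Ω) (y : ℂ × ℂ → ℂ)
    (hy : AnalyticOnNhd ℂ y Ω) (hy0 : ∀ p ∈ Ω, y p ≠ 0)
    (hJ : ∀ p ∈ Ω,
      dt y p = dz (schrodingerPotential y) p * y p
        - 2 * schrodingerPotential y p * dz y p) :
    ∀ p ∈ Ω,
      dt (schrodingerPotential y) p
        = -(dz (dz (dz (schrodingerPotential y))) p)
          - 6 * schrodingerPotential y p * dz (schrodingerPotential y) p := by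
  intro p hp
  set u := schrodingerPotential y with hu_def
  -- analyticity of all relevant functions
  have hAy1 : AnalyticOnNhd ℂ (dz y) Ω := adv hy (1, 0)
  have hAy2 : AnalyticOnNhd ℂ (dz (dz y)) Ω := adv hAy1 (1, 0)
  have hAu : AnalyticOnNhd ℂ u Ω := (hAy2.neg).div hy hy0
  have hAu1 : AnalyticOnNhd ℂ (dz u) Ω := adv hAu (1, 0)
  have hAu2 : AnalyticOnNhd ℂ (dz (dz u)) Ω := adv hAu1 (1, 0)
  have hAty : AnalyticOnNhd ℂ (dt y) Ω := adv hy (0, 1)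
  -- neighborhood eventual equality helper
  have hnh : ∀ {q : ℂ × ℂ}, q ∈ Ω → ∀ {f g : ℂ × ℂ → ℂ},
      (∀ r ∈ Ω, f r = g r) → f =ᶠ[nhds q] g := by
    intro q hq f g h
    exact Filter.eventuallyEq_of_mem (hΩ.mem_nhds hq) (fun r hr => h r hr)
  -- the Schrödinger equation y'' = -(u y)
  have hS : ∀ q ∈ Ω, dz (dz y) q = -(u q * y q) := by
    intro q hq
    have h0 := hy0 q hq
    rw [hu_def]
    simp only [schrodingerPotential]
    field_simp
  -- derivative of the Schrödinger equation: y''' = -(u' y + u y')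
  have hS1 : ∀ q ∈ Ω, dz (dz (dz y)) q = -(dz u q * y q + u q * dz y q) := by
    intro q hq
    have hev : dz (dz y) =ᶠ[nhds q] fun r => -(u r * y r) := hnh hq hS
    have h1 : dz (dz (dz y)) q = fderiv ℂ (fun r => -(u r * y r)) q (1, 0) := by
      show fderiv ℂ (dz (dz y)) q (1, 0) = _
      rw [hev.fderiv_eq]
    rw [h1, dv_neg (f := fun r => u r * y r),
      dv_mul (hAu q hq).differentiableAt (hy q hq).differentiableAt]
    rfl
  -- z-derivative of the evolution equation
  have hJ1 : ∀ q ∈ Ω, dz (dt y) q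
      = dz (dz u) q * y q + dz u q * dz y q
        - (2 * (dz u q * dz y q + u q * dz (dz y) q)) := by
    intro q hq
    have hev : dt y =ᶠ[nhds q] fun r => dz u r * y r - 2 * (u r * dz y r) := by
      refine hnh hq ?_
      intro r hr
      rw [hJ r hr]; ring
    have h1 : dz (dt y) q = fderiv ℂ (fun r => dz u r * y r - 2 * (u r * dz y r)) q (1, 0) := by
      show fderiv ℂ (dt y) q (1, 0) = _
      rw [hev.fderiv_eq]
    have d1 : DifferentiableAt ℂ (fun r => dz u r * y r) q :=
      ((hAu1 q hq).mul (hy q hq)).differentiableAt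
    have d2 : DifferentiableAt ℂ (fun r => u r * dz y r) q :=
      ((hAu q hq).mul (hAy1 q hq)).differentiableAt
    rw [h1, dv_sub d1 (d2.const_mul 2),
      dv_mul (hAu1 q hq).differentiableAt (hy q hq).differentiableAt,
      dv_const_mul d2 2,
      dv_mul (hAu q hq).differentiableAt (hAy1 q hq).differentiableAt]
    rfl
  -- second z-derivative of the evolution equation, at p
  have hJ2 : dz (dz (dt y)) p
      = dz (dz (dz u)) p * y p - 3 * dz u p * dz (dz y) p - 2 * u p * dz (dz (dz y)) p := by
    have hev : dz (dt y) =ᶠ[nhds p] fun r =>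
        dz (dz u) r * y r + dz u r * dz y r
          - 2 * (dz u r * dz y r + u r * dz (dz y) r) := by
      refine hnh hp ?_
      intro r hr
      rw [hJ1 r hr]
    have h1 : dz (dz (dt y)) p = fderiv ℂ (fun r =>
        dz (dz u) r * y r + dz u r * dz y r
          - 2 * (dz u r * dz y r + u r * dz (dz y) r)) p (1, 0) := by
      show fderiv ℂ (dz (dt y)) p (1, 0) = _
      rw [hev.fderiv_eq]
    have d1 : DifferentiableAt ℂ (fun r => dz (dz u) r * y r) p :=
      ((hAu2 p hp).mul (hy p hp)).differentiableAt
    have d2 : DifferentiableAt ℂ (fun r => dz u r * dz y r) p :=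
      ((hAu1 p hp).mul (hAy1 p hp)).differentiableAt
    have d3 : DifferentiableAt ℂ (fun r => u r * dz (dz y) r) p :=
      ((hAu p hp).mul (hAy2 p hp)).differentiableAt
    rw [h1, dv_sub (f := fun r => dz (dz u) r * y r + dz u r * dz y r)
        (g := fun r => 2 * (dz u r * dz y r + u r * dz (dz y) r))
        (d1.add d2) ((d2.add d3).const_mul 2), dv_add d1 d2,
      dv_const_mul (f := fun r => dz u r * dz y r + u r * dz (dz y) r) (d2.add d3) 2, dv_add d2 d3,
      dv_mul (hAu2 p hp).differentiableAt (hy p hp).differentiableAt,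
      dv_mul (hAu1 p hp).differentiableAt (hAy1 p hp).differentiableAt,
      dv_mul (hAu p hp).differentiableAt (hAy2 p hp).differentiableAt]
    simp only [dz]
    ring
  -- Clairaut: mixed partials of y commute on Ω
  have hzt : ∀ q ∈ Ω, dz (dt y) q = dt (dz y) q := by
    intro q hq
    exact clairaut (hy q hq) (0, 1) (1, 0)
  -- commute derivatives: ∂t ∂z² y = ∂z² ∂t y at p
  have h6 : dt (dz (dz y)) p = dz (dz (dt y)) p := by
    have hev : dz (dt y) =ᶠ[nhds p] dt (dz y) := hnh hp hzt
    have h1 : dz (dz (dt y)) p = dz (dt (dz y)) p := by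
      show fderiv ℂ (dz (dt y)) p (1, 0) = fderiv ℂ (dt (dz y)) p (1, 0)
      rw [hev.fderiv_eq]
    have h2 : dz (dt (dz y)) p = dt (dz (dz y)) p := clairaut (hAy1 p hp) (0, 1) (1, 0)
    rw [h1, h2]
  -- t-derivative of the Schrödinger equation at p
  have h7 : dt (dz (dz y)) p = -(dt u p * y p + u p * dt y p) := by
    have hev : dz (dz y) =ᶠ[nhds p] fun r => -(u r * y r) := hnh hp hS
    show fderiv ℂ (dz (dz y)) p (0, 1) = _
    rw [hev.fderiv_eq, dv_neg (f := fun r => u r * y r),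
      dv_mul (hAu p hp).differentiableAt (hy p hp).differentiableAt]
    rfl
  -- assemble
  have hYp := hy0 p hp
  have e1 : -(dt u p * y p + u p * dt y p)
      = dz (dz (dz u)) p * y p - 3 * dz u p * dz (dz y) p - 2 * u p * dz (dz (dz y)) p := by
    rw [← h7, h6, hJ2]
  rw [hS p hp, hS1 p hp, hJ p hp] at e1
  have key : dt u p * y p = (-(dz (dz (dz u)) p) - 6 * u p * dz u p) * y p := by
    linear_combination -e1
  exact mul_right_cancel₀ hYp key
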